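/- Let G be a finite group and Z ≤ Z(G) ∩ O_p(G). Then G is of characteristic p if and only if G/Z is of characteristic p. -/

import Mathlib

open Pointwise


variable (p : ℕ) (G : Type*) [Group G]

/-- `O_p(G)`: the join of all normal `p`-subgroups of `G` (the largest normal `p`-subgroup
when `G` is finite). -/
def pCore : Subgroup G :=
  ⨆ H : {H : Subgroup G // H.Normal ∧ IsPGroup p H}, H.1

/-- `O_{p'}(G)`: the join of all normal subgroups of order coprime to `p` (the largest normal
`p'`-subgroup when `G` is finite). -/
def pPrimeCore : Subgroup G :=
  ⨆ H : {H : Subgroup G // H.Normal ∧ Nat.Coprime (Nat.card H) p}, H.1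

lemma iSup_normal {G : Type*} [Group G] {ι : Sort*} (H : ι → Subgroup G)
    (h : ∀ i, (H i).Normal) : (⨆ i, H i).Normal := by
  constructor
  intro n hn g
  refine Subgroup.iSup_induction (C := fun x => g * x * g⁻¹ ∈ ⨆ i, H i) H hn
    (fun i x hx => ?_) ?_ (fun x y hx hy => ?_)
  · exact Subgroup.mem_iSup_of_mem i ((h i).conj_mem x hx g)
  · simpa using Subgroup.one_mem (⨆ i, H i)
  · have e : g * (x * y) * g⁻¹ = (g * x * g⁻¹) * (g * y * g⁻¹) := by group
    show g * (x * y) * g⁻¹ ∈ ⨆ i, H i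
    rw [e]; exact mul_mem hx hy

instance pCore_normal : (pCore p G).Normal := iSup_normal _ (fun i => i.2.1)

instance pPrimeCore_normal : (pPrimeCore p G).Normal := iSup_normal _ (fun i => i.2.1)

/-- A group `G` is of characteristic `p` if `C_G(O_p(G)) ≤ O_p(G)`. -/
def IsCharP : Prop :=
  Subgroup.centralizer ((pCore p G : Subgroup G) : Set G) ≤ pCore p G

/-- A group `G` is almost of characteristic `p` if `G/O_{p'}(G)` is of characteristic `p`. -/
def IsAlmostCharP : Prop := IsCharP p (G ⧸ pPrimeCore p G)

lemma le_pCore {p : ℕ} {G : Type*} [Group G] {H : Subgroup G} (hn : H.Normal)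
    (hp : IsPGroup p H) : H ≤ pCore p G :=
  le_iSup (fun H : {H : Subgroup G // H.Normal ∧ IsPGroup p H} => H.1) ⟨H, hn, hp⟩

lemma pCore_le_sylow {p : ℕ} [Fact p.Prime] {G : Type*} [Group G] [Finite G]
    (Q : Sylow p G) : pCore p G ≤ Q := by
  refine iSup_le fun ⟨H, hn, hp⟩ => ?_
  obtain ⟨R, hR⟩ := hp.exists_le_sylow
  obtain ⟨g, rfl⟩ := MulAction.exists_smul_eq G R Q
  show H ≤ (g • R : Sylow p G)
  calc H = MulAut.conj g • H := (Subgroup.Normal.conj_smul_eq_self (h := hn) g H).symm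
  _ ≤ MulAut.conj g • (R : Subgroup G) :=
      Subgroup.pointwise_smul_le_pointwise_smul_iff.mpr hR
  _ = ((g • R : Sylow p G) : Subgroup G) := Sylow.coe_subgroup_smul.symm

lemma pCore_isPGroup {p : ℕ} [Fact p.Prime] {G : Type*} [Group G] [Finite G] :
    IsPGroup p (pCore p G) := by
  obtain ⟨Q⟩ : Nonempty (Sylow p G) := inferInstance
  exact IsPGroup.to_le Q.isPGroup' (pCore_le_sylow Q)

lemma isPGroup_of_forall {p : ℕ} {G : Type*} [Group G] {H : Subgroup G}
    (h : ∀ g ∈ H, ∃ k, g ^ p ^ k = 1) : IsPGroup p H := fun g => by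
  obtain ⟨k, hk⟩ := h g g.2
  exact ⟨k, by ext; simpa using hk⟩

lemma exists_pow_eq_one {p : ℕ} {G : Type*} [Group G] {H : Subgroup G} (hp : IsPGroup p H)
    {g : G} (hg : g ∈ H) : ∃ k, g ^ p ^ k = 1 := by
  obtain ⟨k, hk⟩ := hp ⟨g, hg⟩
  exact ⟨k, by simpa [Subtype.ext_iff] using hk⟩

lemma centralizer_normal {G : Type*} [Group G] (H : Subgroup G) [hH : H.Normal] :
    (Subgroup.centralizer (H : Set G)).Normal := by
  constructor
  intro c hc g
  rw [Subgroup.mem_centralizer_iff] at hc ⊢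
  intro n hn
  have h1 := hc (g⁻¹ * n * g) (by simpa using hH.conj_mem n hn g⁻¹)
  calc n * (g * c * g⁻¹) = g * ((g⁻¹ * n * g) * c) * g⁻¹ := by group
  _ = g * (c * (g⁻¹ * n * g)) * g⁻¹ := by rw [h1]
  _ = g * c * g⁻¹ * n := by group

lemma commutator_mem_of_comm {G : Type*} [Group G] (Z : Subgroup G) [Z.Normal]
    {d w : G} (h : (w : G ⧸ Z) * (d : G ⧸ Z) = (d : G ⧸ Z) * (w : G ⧸ Z)) :
    d * w * d⁻¹ * w⁻¹ ∈ Z := by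
  rw [← QuotientGroup.eq_one_iff]
  simp only [QuotientGroup.mk_mul, QuotientGroup.mk_inv]
  rw [← h]
  group

lemma pCore_quotient {p : ℕ} [Fact p.Prime] {G : Type*} [Group G] [Finite G] (Z : Subgroup G)
    [Z.Normal] (hZle : Z ≤ pCore p G) :
    pCore p (G ⧸ Z) = (pCore p G).map (QuotientGroup.mk' Z) := by
  have hZp : IsPGroup p Z := IsPGroup.to_le pCore_isPGroup hZle
  apply le_antisymm
  · have hD : Subgroup.comap (QuotientGroup.mk' Z) (pCore p (G ⧸ Z)) ≤ pCore p G := by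
      refine le_pCore (Subgroup.Normal.comap inferInstance _) (isPGroup_of_forall ?_)
      intro d hd
      obtain ⟨k, hk⟩ := exists_pow_eq_one pCore_isPGroup hd
      have hz : d ^ p ^ k ∈ Z := by
        rw [← QuotientGroup.eq_one_iff, QuotientGroup.mk_pow]
        exact hk
      obtain ⟨j, hj⟩ := exists_pow_eq_one hZp hz
      refine ⟨k + j, ?_⟩
      rwa [← pow_mul, ← pow_add] at hj
    calc pCore p (G ⧸ Z)
        = (Subgroup.comap (QuotientGroup.mk' Z) (pCore p (G ⧸ Z))).map (QuotientGroup.mk' Z) :=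
          (Subgroup.map_comap_eq_self_of_surjective (QuotientGroup.mk'_surjective Z) _).symm
    _ ≤ _ := Subgroup.map_mono hD
  · exact le_pCore (Subgroup.Normal.map inferInstance _ (QuotientGroup.mk'_surjective Z))
      (pCore_isPGroup.map _)

lemma conj_pow_aux {G : Type*} [Group G] {y w c : G} (hc : ∀ x : G, Commute c x)
    (h : y * w * y⁻¹ = c * w) (k : ℕ) : y ^ k * w * (y⁻¹) ^ k = c ^ k * w := by
  induction k with
  | zero => simp
  | succ k ih =>
    have e1 : y ^ (k + 1) * w * (y⁻¹) ^ (k + 1) = y * (y ^ k * w * (y⁻¹) ^ k) * y⁻¹ := by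
      rw [pow_succ', pow_succ]; group
    have e2 : y * (c ^ k * w) * y⁻¹ = c ^ k * (y * w * y⁻¹) := by
      rw [← mul_assoc, ← ((hc y).pow_left k).eq]; group
    rw [e1, ih, e2, h, pow_succ, mul_assoc]

/-- Let `G` be a finite group and `Z ≤ Z(G) ∩ O_p(G)`. Then `G` is of characteristic `p` if and
only if `G/Z` is of characteristic `p`. -/
theorem isCharP_iff_quotient (p : ℕ) [Fact p.Prime] (G : Type*) [Group G] [Finite G]
    (Z : Subgroup G) [Z.Normal] (hZ : Z ≤ Subgroup.center G ⊓ pCore p G) :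
    IsCharP p G ↔ IsCharP p (G ⧸ Z) := by
  have hZc : Z ≤ Subgroup.center G := hZ.trans inf_le_left
  have hZP : Z ≤ pCore p G := hZ.trans inf_le_right
  have hq := pCore_quotient Z hZP
  constructor
  · intro h x hx
    rw [hq] at hx ⊢
    obtain ⟨d, rfl⟩ := QuotientGroup.mk'_surjective Z x
    have key : Subgroup.comap (QuotientGroup.mk' Z)
        (Subgroup.centralizer
          (((pCore p G).map (QuotientGroup.mk' Z) : Subgroup (G ⧸ Z)) : Set (G ⧸ Z)))
        ≤ pCore p G := by
      have hmapn : ((pCore p G).map (QuotientGroup.mk' Z)).Normal :=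
        Subgroup.Normal.map inferInstance _ (QuotientGroup.mk'_surjective Z)
      refine le_pCore (Subgroup.Normal.comap (centralizer_normal _) _) (isPGroup_of_forall ?_)
      intro d hd
      set n := orderOf d with hn
      have hn0 : n ≠ 0 := (orderOf_pos d).ne'
      set a := n.factorization p with ha
      set m := n / p ^ a with hm
      have hnm : p ^ a * m = n := Nat.ordProj_mul_ordCompl_eq_self n p
      have hmp : Nat.Coprime p m := Nat.coprime_ordCompl (Fact.out : p.Prime) hn0
      set y := d ^ p ^ a with hy
      have hym : y ^ m = 1 := by rw [hy, ← pow_mul, hnm, hn, pow_orderOf_eq_one]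
      -- y lies in the same comap (powers of d do)
      have hyd : (y : G ⧸ Z) ∈ Subgroup.centralizer
          (((pCore p G).map (QuotientGroup.mk' Z) : Subgroup (G ⧸ Z)) : Set (G ⧸ Z)) := by
        have : ((y : G) : G ⧸ Z) = ((d : G ⧸ Z)) ^ p ^ a := QuotientGroup.mk_pow Z d (p ^ a)
        rw [this]
        exact pow_mem hd _
      -- y centralizes pCore p G
      have hyc : y ∈ Subgroup.centralizer ((pCore p G : Subgroup G) : Set G) := by
        rw [Subgroup.mem_centralizer_iff]
        intro w hw
        set c := y * w * y⁻¹ * w⁻¹ with hcdef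
        have hcZ : c ∈ Z := by
          refine commutator_mem_of_comm Z ?_
          have := (Subgroup.mem_centralizer_iff.mp hyd) _ (Subgroup.mem_map_of_mem _ hw)
          simpa using this
        have hcC : ∀ x : G, Commute c x := fun x =>
          (Subgroup.mem_center_iff.mp (hZc hcZ) x).symm
        have h1 : y * w * y⁻¹ = c * w := by rw [hcdef]; group
        have h2 := conj_pow_aux hcC h1 m
        rw [inv_pow, hym] at h2
        simp only [one_mul, inv_one, mul_one] at h2
        have hcm : c ^ m = 1 := right_eq_mul.mp h2
        obtain ⟨j, hj⟩ := exists_pow_eq_one pCore_isPGroup (hZP hcZ)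
        have hc1 : c = 1 := by
          have h3 : orderOf c ∣ m := orderOf_dvd_of_pow_eq_one hcm
          have h4 : orderOf c ∣ p ^ j := orderOf_dvd_of_pow_eq_one hj
          have hg : Nat.gcd (p ^ j) m = 1 := Nat.Coprime.pow_left j hmp
          have h5 : orderOf c ∣ 1 := hg ▸ Nat.dvd_gcd h4 h3
          exact orderOf_eq_one_iff.mp (Nat.dvd_one.mp h5)
        have hfix : y * w * y⁻¹ = w := by rw [h1, hc1, one_mul]
        calc w * y = y * w * y⁻¹ * y := by rw [hfix]
        _ = y * w := by group
      have hyP : y ∈ pCore p G := h hyc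
      obtain ⟨j, hj⟩ := exists_pow_eq_one pCore_isPGroup hyP
      have hy1 : y = 1 := by
        have h3 : orderOf y ∣ m := orderOf_dvd_of_pow_eq_one hym
        have h4 : orderOf y ∣ p ^ j := orderOf_dvd_of_pow_eq_one hj
        have hg : Nat.gcd (p ^ j) m = 1 := Nat.Coprime.pow_left j hmp
        have h5 : orderOf y ∣ 1 := hg ▸ Nat.dvd_gcd h4 h3
        exact orderOf_eq_one_iff.mp (Nat.dvd_one.mp h5)
      exact ⟨a, hy1⟩
    exact Subgroup.mem_map_of_mem _ (key hx)
  · intro h x hx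
    have hx' : ((x : G) : G ⧸ Z) ∈ Subgroup.centralizer
        ((pCore p (G ⧸ Z) : Subgroup (G ⧸ Z)) : Set (G ⧸ Z)) := by
      rw [hq, Subgroup.mem_centralizer_iff]
      rintro _ ⟨w, hw, rfl⟩
      have := (Subgroup.mem_centralizer_iff.mp hx) w hw
      simp only [QuotientGroup.mk'_apply]
      rw [← QuotientGroup.mk_mul, ← QuotientGroup.mk_mul, this]
    have hmem := h hx'
    rw [hq] at hmem
    obtain ⟨w, hw, hwx⟩ := hmem
    have hz : w⁻¹ * x ∈ Z := by
      rw [← QuotientGroup.eq_one_iff]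
      simp only [QuotientGroup.mk'_apply] at hwx
      rw [QuotientGroup.mk_mul, QuotientGroup.mk_inv, hwx]
      simp
    have hx2 : x = w * (w⁻¹ * x) := by group
    rw [hx2]
    exact mul_mem hw (hZP hz)
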